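/- If u and v are squarefree monomials of the same degree d in a polynomial ring, then both components of the sorting sort(u,v) = (u', v') are again squarefree monomials of degree d. -/

import Mathlib

/-- A monomial in the variables `x_1, x_2, …` is encoded as the multiset of indices of the
variables occurring in it (with multiplicity); its degree is the cardinality of the multiset,
and it is squarefree iff the multiset has no duplicates. `msortFst u v` is the first component
`u'` of the sorting `sort(u,v)`: write `uv = x_{i_1} ⋯ x_{i_{2d}}` with
`i_1 ≤ ⋯ ≤ i_{2d}` and take the variables at odd positions. -/
def msortFst (u v : Multiset ℕ) : Multiset ℕ :=
  ↑((((u + v).sort (· ≤ ·)).zipIdx.filter (fun p => p.2 % 2 = 0)).map Prod.fst)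

/-- The second component `v'` of the sorting: the variables at even positions. -/
def msortSnd (u v : Multiset ℕ) : Multiset ℕ :=
  ↑((((u + v).sort (· ≤ ·)).zipIdx.filter (fun p => p.2 % 2 = 1)).map Prod.fst)

mutual
def evens : List ℕ → List ℕ
  | [] => []
  | a :: l => a :: odds l
def odds : List ℕ → List ℕ
  | [] => []
  | _ :: l => evens l
end

lemma filter_enumFrom (l : List ℕ) : ∀ n,
    (n % 2 = 0 →
      ((l.zipIdx n).filter (fun p => p.2 % 2 = 0)).map Prod.fst = evens l ∧
      ((l.zipIdx n).filter (fun p => p.2 % 2 = 1)).map Prod.fst = odds l) ∧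
    (n % 2 = 1 →
      ((l.zipIdx n).filter (fun p => p.2 % 2 = 0)).map Prod.fst = odds l ∧
      ((l.zipIdx n).filter (fun p => p.2 % 2 = 1)).map Prod.fst = evens l) := by
  induction l with
  | nil => intro n; simp [evens, odds]
  | cons a l ih =>
    intro n
    constructor
    · intro h0
      have h1 : (n+1) % 2 = 1 := by omega
      have H := (ih (n+1)).2 h1
      have h0' : ¬ (n % 2 = 1) := by omega
      simp [List.zipIdx, List.filter_cons, h0, h0', evens, odds, H.1, H.2]
    · intro h1
      have h0 : (n+1) % 2 = 0 := by omega
      have H := (ih (n+1)).1 h0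
      have h1' : ¬ (n % 2 = 0) := by omega
      simp [List.zipIdx, List.filter_cons, h1, h1', evens, odds, H.1, H.2]

lemma evens_odds_length (l : List ℕ) :
    (evens l).length = (l.length + 1) / 2 ∧ (odds l).length = l.length / 2 := by
  induction l with
  | nil => simp [evens, odds]
  | cons a l ih => simp [evens, odds, ih.1, ih.2]; omega

lemma evens_odds_sublist (l : List ℕ) :
    (evens l).Sublist l ∧ (odds l).Sublist l.tail := by
  induction l with
  | nil => simp [evens, odds]
  | cons a l ih =>
    refine ⟨?_, by simpa [odds] using ih.1⟩
    simp only [evens]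
    exact (ih.2.trans (List.tail_sublist l)).cons₂ a

lemma evens_odds_sorted (l : List ℕ) (hs : l.Pairwise (· ≤ ·))
    (hc : ∀ a, l.count a ≤ 2) :
    (evens l).Pairwise (· < ·) ∧ (odds l).Pairwise (· < ·) := by
  induction l with
  | nil => simp [evens, odds]
  | cons a t ih =>
    have hst : t.Pairwise (· ≤ ·) := hs.of_cons
    have hct : ∀ b, t.count b ≤ 2 := by
      intro b; have := hc b; simp [List.count_cons] at this ⊢; omega
    have IH := ih hst hct
    constructor
    · simp only [evens, List.pairwise_cons]
      refine ⟨?_, IH.2⟩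
      intro x hx
      have hxt : x ∈ t.tail := (evens_odds_sublist t).2.subset hx
      match t, hxt with
      | c :: t', hxt =>
        have hac : a ≤ c := (List.pairwise_cons.mp hs).1 c (by simp)
        have hcx : c ≤ x := (List.pairwise_cons.mp hst).1 x hxt
        rcases lt_or_eq_of_le (hac.trans hcx) with h | h
        · exact h
        · exfalso
          have hca : c = a := le_antisymm (h ▸ hcx) hac
          subst hca
          have hm : c ∈ t' := h ▸ hxt
          have hcount := hc c
          have h3 : (c :: c :: t').count c = t'.count c + 2 := by
            simp [List.count_cons]
          have h1 : 1 ≤ t'.count c := List.count_pos_iff.mpr hm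
          omega
    · simpa [odds] using ih hst hct |>.1

theorem stmt_1 (d : ℕ) (u v : Multiset ℕ)
    (hu : u.card = d) (hv : v.card = d)
    (hus : u.Nodup) (hvs : v.Nodup) :
    (msortFst u v).Nodup ∧ (msortFst u v).card = d ∧
    (msortSnd u v).Nodup ∧ (msortSnd u v).card = d := by
  set l := (u + v).sort (· ≤ ·) with hl
  have he : msortFst u v = ↑(evens l) := by
    rw [msortFst, ((filter_enumFrom l 0).1 rfl).1]
  have ho : msortSnd u v = ↑(odds l) := by
    rw [msortSnd, ((filter_enumFrom l 0).1 rfl).2]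
  have hlen : l.length = 2 * d := by
    rw [hl, Multiset.length_sort, Multiset.card_add, hu, hv]; ring
  have hsorted : l.Pairwise (· ≤ ·) := Multiset.pairwise_sort _ _
  have hcount : ∀ a, l.count a ≤ 2 := by
    intro a
    have : l.count a = (u + v).count a := by
      rw [hl, ← Multiset.coe_count, Multiset.sort_eq]
    rw [this, Multiset.count_add]
    have h1 := Multiset.nodup_iff_count_le_one.mp hus a
    have h2 := Multiset.nodup_iff_count_le_one.mp hvs a
    omega
  have hS := evens_odds_sorted l hsorted hcount
  have hL := evens_odds_length l
  refine ⟨?_, ?_, ?_, ?_⟩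
  · rw [he, Multiset.coe_nodup]; exact hS.1.nodup
  · rw [he, Multiset.coe_card, hL.1, hlen]; omega
  · rw [ho, Multiset.coe_nodup]; exact hS.2.nodup
  · rw [ho, Multiset.coe_card, hL.2, hlen]; omega
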